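/- Let f : ℝⁿ → ℝ be convex and differentiable, let Q be the nonnegative orthant, let L > 0 and y ∈ ℝⁿ, and set x⁺ = P(y − (1/L)∇f(y)) and G = L(y − x⁺). Assume the descent condition f(x⁺) ≤ f(y) + ⟨∇f(y), x⁺ − y⟩ + (L/2)‖x⁺ − y‖² holds. Then for every x ∈ Q, f(x⁺) ≤ f(x) + ⟨G, y − x⟩ − (1/(2L))‖G‖². -/

import Mathlib

open scoped RealInnerProductSpace

theorem convex_first_order {n : ℕ} {f : EuclideanSpace ℝ (Fin n) → ℝ}
    (hconv : ConvexOn ℝ Set.univ f) {y g : EuclideanSpace ℝ (Fin n)}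
    (hg : HasGradientAt f g y) (x : EuclideanSpace ℝ (Fin n)) :
    f y + ⟪g, x - y⟫ ≤ f x := by
  have hd : HasDerivAt (fun t : ℝ => f (y + t • (x - y))) ⟪g, x - y⟫ 0 := by
    have h1 : HasDerivAt (fun t : ℝ => y + t • (x - y)) (x - y) 0 := by
      simpa using ((hasDerivAt_id (0:ℝ)).smul_const (x - y)).const_add y
    have := ((by simpa using hg.hasFDerivAt : HasFDerivAt f ((InnerProductSpace.toDual ℝ (EuclideanSpace ℝ (Fin n))) g) (y + (0:ℝ) • (x - y))).comp_hasDerivAt 0 h1)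
    simpa [InnerProductSpace.toDual, Function.comp_def] using this
  have key : Filter.Tendsto (fun t : ℝ => (f (y + t • (x - y)) - f y) / t)
      (nhdsWithin 0 (Set.Ioi 0)) (nhds ⟪g, x - y⟫) := by
    have := hd.hasDerivWithinAt (s := Set.Ioi (0:ℝ))
    have h2 := (hasDerivWithinAt_iff_tendsto_slope.mp this)
    refine (h2.mono_left (nhdsWithin_mono _ (by intro t ht; exact Set.mem_diff_of_mem ht (ne_of_gt ht)))).congr ?_
    intro t
    simp [slope, vsub_eq_sub, div_eq_inv_mul]
  have hle : ∀ᶠ t in nhdsWithin (0:ℝ) (Set.Ioi 0),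
      (f (y + t • (x - y)) - f y) / t ≤ f x - f y := by
    filter_upwards [Ioo_mem_nhdsGT_of_mem (by norm_num : (0:ℝ) ∈ Set.Ico 0 1)] with t ht
    obtain ⟨ht0, ht1⟩ := ht
    have hconvineq := hconv.2 (Set.mem_univ y) (Set.mem_univ x)
      (show (0:ℝ) ≤ 1 - t by linarith) ht0.le (by ring)
    have : f (y + t • (x - y)) ≤ (1 - t) * f y + t * f x := by
      have : (1 - t) • y + t • x = y + t • (x - y) := by
        simp [smul_sub, sub_smul]; abel
      simpa [this] using hconvineq
    rw [div_le_iff₀ ht0]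
    nlinarith
  have := le_of_tendsto key hle
  linarith

theorem projected_gradient_key_inequality
    (n : ℕ) (f : EuclideanSpace ℝ (Fin n) → ℝ)
    (f' : EuclideanSpace ℝ (Fin n) → EuclideanSpace ℝ (Fin n))
    (hgrad : ∀ x, HasGradientAt f (f' x) x)
    (hconv : ConvexOn ℝ Set.univ f)
    (Q : Set (EuclideanSpace ℝ (Fin n)))
    (hQ : Q = {x : EuclideanSpace ℝ (Fin n) | ∀ i, 0 ≤ x i})
    (P : EuclideanSpace ℝ (Fin n) → EuclideanSpace ℝ (Fin n))
    (hP : ∀ x i, P x i = max (x i) 0)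
    (L : ℝ) (hL : 0 < L) (y : EuclideanSpace ℝ (Fin n))
    (xplus : EuclideanSpace ℝ (Fin n))
    (hxplus : xplus = P (y - (1 / L) • f' y))
    (G : EuclideanSpace ℝ (Fin n)) (hG : G = L • (y - xplus))
    (hdesc : f xplus ≤ f y + ⟪f' y, xplus - y⟫ + L / 2 * ‖xplus - y‖ ^ 2) :
    ∀ x ∈ Q, f xplus ≤ f x + ⟪G, y - x⟫ - 1 / (2 * L) * ‖G‖ ^ 2 := by
  intro x hx
  rw [hQ] at hx
  -- variational inequality for the projection onto the orthant, componentwise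
  have hvar : ⟪(y - (1 / L) • f' y) - xplus, x - xplus⟫ ≤ 0 := by
    rw [PiLp.inner_apply]
    apply Finset.sum_nonpos
    intro i _
    have hxi : xplus i = max (y i - 1 / L * f' y i) 0 := by
      rw [hxplus, hP]; simp
    simp only [RCLike.inner_apply, conj_trivial, PiLp.sub_apply, PiLp.smul_apply,
      smul_eq_mul, hxi]
    rcases le_or_gt 0 (y i - 1 / L * f' y i) with h | h
    · rw [max_eq_left h]; simp
    · rw [max_eq_right h.le]
      have h2 := hx i
      nlinarith
  -- scaled variational inequality: ⟪G - f' y, x - xplus⟫ ≤ 0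
  have hvar2 : ⟪G - f' y, x - xplus⟫ ≤ 0 := by
    have hrw : G - f' y = L • ((y - (1 / L) • f' y) - xplus) := by
      rw [hG]
      match_scalars <;> field_simp
    rw [hrw, real_inner_smul_left]
    exact mul_nonpos_of_nonneg_of_nonpos hL.le hvar
  -- first-order convexity
  have hfo : f y + ⟪f' y, x - y⟫ ≤ f x := convex_first_order hconv (hgrad y) x
  -- norm identities
  have hGnorm : ‖G‖ ^ 2 = L ^ 2 * ‖y - xplus‖ ^ 2 := by
    rw [hG, norm_smul]
    simp [mul_pow, abs_of_pos hL]
  have hnorm2 : ‖xplus - y‖ = ‖y - xplus‖ := norm_sub_rev _ _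
  -- inner product expansions
  have e1 : ⟪G, y - x⟫ = L * ⟪y - xplus, y - xplus⟫ + L * ⟪y - xplus, xplus - x⟫ := by
    rw [hG, real_inner_smul_left, ← mul_add, ← inner_add_right]
    congr 2
    abel
  have e2 : ⟪y - xplus, y - xplus⟫ = ‖y - xplus‖ ^ 2 := real_inner_self_eq_norm_sq _
  have e3 : ⟪G - f' y, x - xplus⟫ = ⟪G, x - xplus⟫ - ⟪f' y, x - xplus⟫ := inner_sub_left _ _ _
  have e4 : ⟪G, x - xplus⟫ = L * ⟪y - xplus, x - xplus⟫ := by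
    rw [hG, real_inner_smul_left]
  have e5 : ⟪y - xplus, xplus - x⟫ = - ⟪y - xplus, x - xplus⟫ := by
    rw [← inner_neg_right]; congr 1; abel
  have e6 : ⟪f' y, x - xplus⟫ = ⟪f' y, x - y⟫ - ⟪f' y, xplus - y⟫ := by
    rw [← inner_sub_right]; congr 1; abel
  have hLinv : 1 / (2 * L) * ‖G‖ ^ 2 = L / 2 * ‖y - xplus‖ ^ 2 := by
    rw [hGnorm]; field_simp
  rw [hnorm2] at hdesc
  rw [e3, e4, e6] at hvar2
  rw [e1, e2, e5, hLinv]
  nlinarith
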